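/- Let U, Z, A be binary random variables on a discrete probability space with 0 < P(A=a | U=u) < 1 for all a, u ∈ {0,1}. For a ∈ {0,1} and z, u ∈ {0,1} define p_{za.u} = P(Z=z, A=a | U=u), and suppose the determinant Δ_a = p_{0a.0}·p_{1a.1} − p_{0a.1}·p_{1a.0} is nonzero. Define q(a, z) = [p_{1a.1} − p_{1a.0} + (p_{0a.0} − p_{0a.1} − p_{1a.1} + p_{1a.0})·z] / Δ_a. Then for all a, u ∈ {0,1}: E[q(A, Z) | A=a, U=u] = 1/P(A=a | U=u). -/

import Mathlib

open scoped BigOperators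
open Real

attribute [local instance] Classical.propDecidable

noncomputable section

variable {Ω : Type*}

/-- Probability of an event under weight function `P` on a finite sample space. -/
def pr [Fintype Ω] (P : Ω → ℝ) (E : Ω → Prop) : ℝ :=
  ∑ ω, if E ω then P ω else 0

/-- Conditional probability `P(E | F)`. -/
def cpr [Fintype Ω] (P : Ω → ℝ) (E F : Ω → Prop) : ℝ :=
  pr P (fun ω => E ω ∧ F ω) / pr P F

/-- Conditional expectation `E[f | F]`. -/
def cexp [Fintype Ω] (P : Ω → ℝ) (f : Ω → ℝ) (F : Ω → Prop) : ℝ :=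
  (∑ ω, if F ω then f ω * P ω else 0) / pr P F

/-- Conditional independence `f ⊥ g | h` under `P`. -/
def CondIndep [Fintype Ω] (P : Ω → ℝ) {α β γ : Type*}
    (f : Ω → α) (g : Ω → β) (h : Ω → γ) : Prop :=
  ∀ a b c, pr P (fun ω => h ω = c) ≠ 0 →
    cpr P (fun ω => f ω = a ∧ g ω = b) (fun ω => h ω = c) =
      cpr P (fun ω => f ω = a) (fun ω => h ω = c) *
        cpr P (fun ω => g ω = b) (fun ω => h ω = c)

/-- Example 1: closed-form treatment confounding bridge function
with binary `U` and binary `Z`. -/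
theorem stmt2 [Fintype Ω]
    (P : Ω → ℝ) (hP : ∀ ω, 0 ≤ P ω) (hPsum : ∑ ω, P ω = 1)
    (U Z A : Ω → ℕ)
    (hU : ∀ ω, U ω = 0 ∨ U ω = 1) (hZ : ∀ ω, Z ω = 0 ∨ Z ω = 1)
    (hA : ∀ ω, A ω = 0 ∨ A ω = 1)
    (hpos : ∀ (a u : ℕ), (a = 0 ∨ a = 1) → (u = 0 ∨ u = 1) →
      0 < cpr P (fun ω => A ω = a) (fun ω => U ω = u) ∧
        cpr P (fun ω => A ω = a) (fun ω => U ω = u) < 1)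
    (p : ℕ → ℕ → ℕ → ℝ)
    (hp : ∀ z a u, p z a u =
      cpr P (fun ω => Z ω = z ∧ A ω = a) (fun ω => U ω = u))
    (Δ : ℕ → ℝ)
    (hΔdef : ∀ a, Δ a = p 0 a 0 * p 1 a 1 - p 0 a 1 * p 1 a 0)
    (hΔ : ∀ a, (a = 0 ∨ a = 1) → Δ a ≠ 0)
    (q : ℕ → ℕ → ℝ)
    (hq : ∀ a z, q a z =
      (p 1 a 1 - p 1 a 0 + (p 0 a 0 - p 0 a 1 - p 1 a 1 + p 1 a 0) * (z : ℝ)) / Δ a) :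
    ∀ (a u : ℕ), (a = 0 ∨ a = 1) → (u = 0 ∨ u = 1) →
      cexp P (fun ω => q a (Z ω)) (fun ω => A ω = a ∧ U ω = u) =
        (cpr P (fun ω => A ω = a) (fun ω => U ω = u))⁻¹ := by
  intro a u ha hu
  have prnn : ∀ E : Ω → Prop, 0 ≤ pr P E := by
    intro E
    apply Finset.sum_nonneg
    intro ω _
    by_cases h : E ω <;> simp [h, hP ω]
  set Pu := pr P (fun ω => U ω = u) with hPu
  set PAU := pr P (fun ω => A ω = a ∧ U ω = u) with hPAU
  have hcpr : cpr P (fun ω => A ω = a) (fun ω => U ω = u) = PAU / Pu := rfl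
  have hPupos : 0 < Pu := by
    rcases lt_or_eq_of_le (prnn (fun ω => U ω = u)) with h | h
    · exact h
    · exfalso
      have hz : Pu = 0 := h.symm
      have := (hpos a u ha hu).1
      rw [hcpr, hz, div_zero] at this
      exact lt_irrefl 0 this
  have hPAUpos : 0 < PAU := by
    have h1 := (hpos a u ha hu).1
    rw [hcpr] at h1
    have := mul_pos h1 hPupos
    rwa [div_mul_cancel₀ _ (ne_of_gt hPupos)] at this
  -- express joint probabilities
  have hjoint : ∀ z, pr P (fun ω => (Z ω = z ∧ A ω = a) ∧ U ω = u) = p z a u * Pu := by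
    intro z
    rw [hp z a u]
    unfold cpr
    rw [div_mul_cancel₀ _ (ne_of_gt hPupos)]
  -- split numerator by Z value
  have hnum : (∑ ω, if A ω = a ∧ U ω = u then q a (Z ω) * P ω else 0) =
      q a 0 * pr P (fun ω => (Z ω = 0 ∧ A ω = a) ∧ U ω = u) +
      q a 1 * pr P (fun ω => (Z ω = 1 ∧ A ω = a) ∧ U ω = u) := by
    unfold pr
    rw [Finset.mul_sum, Finset.mul_sum, ← Finset.sum_add_distrib]
    apply Finset.sum_congr rfl
    intro ω _
    rcases hZ ω with h | h <;> simp [h, mul_ite]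
  have key : q a 0 * p 0 a u + q a 1 * p 1 a u = 1 := by
    have hd := hΔ a ha
    rw [hq a 0, hq a 1, hΔdef a] at *
    rcases hu with h | h <;> subst h <;> rw [div_mul_eq_mul_div, div_mul_eq_mul_div, ← add_div, div_eq_one_iff_eq hd] <;> push_cast <;> ring
  simp only [cexp]
  rw [hnum, hjoint 0, hjoint 1, hcpr]
  rw [inv_div]
  have : q a 0 * (p 0 a u * Pu) + q a 1 * (p 1 a u * Pu) = Pu := by
    have : q a 0 * (p 0 a u * Pu) + q a 1 * (p 1 a u * Pu)
        = (q a 0 * p 0 a u + q a 1 * p 1 a u) * Pu := by ring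
    rw [this, key, one_mul]
  rw [this]
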